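/- Let K be a complete non-archimedean field with ring of integers R, f_1,...,f_n ∈ R[Y_1,...,Y_r][X_1,...,X_n], and a ∈ R^n such that f_l(0,...,0,a) = 0 for all l and δ := |det(∂f/∂X)(0,a)| > 0. Then for all y ∈ K^r with |y_l| < δ^2 for all l, there exists a unique b ∈ R^n with f_l(y,b) = 0 and |b_l − a_l| < δ for all l; this defines a map s: {y : |y| < δ^2} → R^n with s(0) = a. -/

import Mathlib

open MvPolynomial

section Helpers

variable {K : Type} [NormedField K]
variable (hna : ∀ x y : K, ‖x + y‖ ≤ max ‖x‖ ‖y‖)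
include hna

lemma na_sum {ι : Type*} (s : Finset ι) (g : ι → K) {C : ℝ} (hC : 0 ≤ C)
    (h : ∀ i ∈ s, ‖g i‖ ≤ C) : ‖∑ i ∈ s, g i‖ ≤ C := by
  classical
  induction s using Finset.induction_on with
  | empty => simpa using hC
  | @insert a s' hx ih =>
    rw [Finset.sum_insert hx]
    refine (hna _ _).trans (max_le (h a (by simp)) (ih fun i hi => h i (by simp [hi])))

lemma na_nat : ∀ k : ℕ, ‖(k : K)‖ ≤ 1 := by
  intro k
  induction k with
  | zero => simp
  | succ m ih =>
    push_cast
    exact (hna _ _).trans (max_le ih (by simp))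

lemma na_sub (x y : K) : ‖x - y‖ ≤ max ‖x‖ ‖y‖ := by
  simpa [sub_eq_add_neg] using hna x (-y)

omit hna in
lemma finsupp_ind {σ : Type*} {p : (σ →₀ ℕ) → Prop} (h0 : p 0)
    (hs : ∀ (j : σ) (d : σ →₀ ℕ), p d → p (d + Finsupp.single j 1)) : ∀ d, p d := by
  classical
  suffices H : ∀ N : ℕ, ∀ d : σ →₀ ℕ, (d.sum fun _ k => k) ≤ N → p d by
    intro d; exact H _ d le_rfl
  intro N
  induction N with
  | zero =>
    intro d hd
    have : d = 0 := by
      ext i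
      by_contra h
      have hi : i ∈ d.support := Finsupp.mem_support_iff.2 h
      have hsum : (d.sum fun _ k => k) = 0 := Nat.le_zero.1 hd
      have := (Finset.sum_eq_zero_iff).1 hsum i hi
      exact h this
    simpa [this] using h0
  | succ N ih =>
    intro d hd
    by_cases hd0 : d = 0
    · simpa [hd0] using h0
    · obtain ⟨j, hj⟩ := Finsupp.support_nonempty_iff.2 hd0
      have hj' : d j ≠ 0 := Finsupp.mem_support_iff.1 hj
      set d' : σ →₀ ℕ := d - Finsupp.single j 1 with hd'
      have hdd : d = d' + Finsupp.single j 1 := by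
        ext i
        simp only [Finsupp.add_apply, Finsupp.tsub_apply, Finsupp.single_apply, hd']
        by_cases hij : j = i
        · subst hij; simp only [↓reduceIte]; omega
        · simp [hij]
      have hsum : (d.sum fun _ k => k) = (d'.sum fun _ k => k) + 1 := by
        rw [hdd, Finsupp.sum_add_index (by simp) (by simp)]
        simp
      have hle : (d'.sum fun _ k => k) ≤ N := by omega
      rw [hdd]
      exact hs j d' (ih d' hle)


omit hna in
lemma prod_step {σ : Type*} [Fintype σ] [DecidableEq σ] (w : σ → K) (d : σ →₀ ℕ) (j : σ) :
    (∏ i, w i ^ ((d + Finsupp.single j 1 : σ →₀ ℕ) i)) = (∏ i, w i ^ d i) * w j := by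
  have h1 : ∀ i, w i ^ ((d + Finsupp.single j 1 : σ →₀ ℕ) i) = w i ^ d i * w i ^ (Finsupp.single j 1) i := by
    intro i; rw [Finsupp.add_apply, pow_add]
  rw [Finset.prod_congr rfl fun i _ => h1 i, Finset.prod_mul_distrib]
  congr 1
  rw [Finset.prod_eq_single j (fun i _ hij => by simp [Finsupp.single_apply, Ne.symm hij])
    (by simp)]
  simp

omit hna in
lemma prodBound {σ : Type*} [Fintype σ] (w : σ → K) (hw : ∀ i, ‖w i‖ ≤ 1) (d : σ →₀ ℕ) :
    ‖∏ i, w i ^ d i‖ ≤ 1 := by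
  rw [norm_prod]
  exact Finset.prod_le_one (fun i _ => by positivity)
    (fun i _ => by simpa using pow_le_one₀ (norm_nonneg _) (hw i) )

variable {σ : Type*} [Fintype σ] [DecidableEq σ] {u v : σ → K} {ε : ℝ}
variable (hu : ∀ i, ‖u i‖ ≤ 1) (hv : ∀ i, ‖v i‖ ≤ 1) (hε0 : 0 ≤ ε)
  (hε : ∀ i, ‖u i - v i‖ ≤ ε)
include hu hv hε0 hε

lemma monoA : ∀ d : σ →₀ ℕ, ‖(∏ i, u i ^ d i) - ∏ i, v i ^ d i‖ ≤ ε := by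
  refine finsupp_ind (by simpa using hε0) ?_
  intro j d ih
  rw [prod_step, prod_step]
  have hid : (∏ i, u i ^ d i) * u j - (∏ i, v i ^ d i) * v j
      = (u j - v j) * (∏ i, u i ^ d i) + v j * ((∏ i, u i ^ d i) - ∏ i, v i ^ d i) := by ring
  rw [hid]
  refine (hna _ _).trans (max_le ?_ ?_)
  · rw [norm_mul]
    calc ‖u j - v j‖ * ‖∏ i, u i ^ d i‖ ≤ ε * 1 :=
      mul_le_mul (hε j) (prodBound u hu d) (norm_nonneg _) hε0
    _ = ε := mul_one ε
  · rw [norm_mul]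
    calc ‖v j‖ * ‖(∏ i, u i ^ d i) - ∏ i, v i ^ d i‖ ≤ 1 * ε :=
      mul_le_mul (hv j) (ih) (norm_nonneg _) zero_le_one
    _ = ε := one_mul ε

lemma monoB : ∀ d : σ →₀ ℕ,
    ‖(∏ i, u i ^ d i) - (∏ i, v i ^ d i)
      - ∑ i, eval v (pderiv i (monomial d (1 : K))) * (u i - v i)‖ ≤ ε ^ 2 := by
  have evmono : ∀ (d : σ →₀ ℕ), eval v (monomial d (1 : K)) = ∏ i, v i ^ d i := by
    intro d
    rw [eval_monomial, one_mul, Finsupp.prod_fintype _ _ (fun i => pow_zero _)]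
  have hstep : ∀ (j : σ) (d : σ →₀ ℕ),
      (∑ i, eval v (pderiv i (monomial (d + Finsupp.single j 1) (1 : K))) * (u i - v i))
      = (∏ i, v i ^ d i) * (u j - v j)
        + v j * ∑ i, eval v (pderiv i (monomial d (1 : K))) * (u i - v i) := by
    intro j d
    have hmono : monomial (d + Finsupp.single j 1) (1 : K) = monomial d 1 * X j := by
      rw [monomial_add_single, pow_one]
    have hterm : ∀ i, eval v (pderiv i (monomial (d + Finsupp.single j 1) (1 : K)))
        * (u i - v i)
        = v j * (eval v (pderiv i (monomial d (1 : K))) * (u i - v i))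
          + (if i = j then (∏ k, v k ^ d k) * (u j - v j) else 0) := by
      intro i
      rw [hmono, pderiv_mul, map_add, map_mul, map_mul, pderiv_X]
      by_cases hij : i = j
      · subst hij
        simp [Pi.single_apply, evmono d]
        ring
      · simp [Pi.single_apply, hij]
        ring
    rw [Finset.sum_congr rfl fun i _ => hterm i, Finset.sum_add_distrib,
      ← Finset.mul_sum, Finset.sum_ite_eq' Finset.univ j]
    simp [add_comm]
  refine finsupp_ind (by simpa using (by positivity : (0:ℝ) ≤ ε ^ 2)) ?_
  intro j d ih
  rw [prod_step, prod_step, hstep]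
  have hid : (∏ i, u i ^ d i) * u j - (∏ i, v i ^ d i) * v j
      - ((∏ i, v i ^ d i) * (u j - v j)
        + v j * ∑ i, eval v (pderiv i (monomial d (1 : K))) * (u i - v i))
      = (u j - v j) * ((∏ i, u i ^ d i) - ∏ i, v i ^ d i)
        + v j * ((∏ i, u i ^ d i) - (∏ i, v i ^ d i)
          - ∑ i, eval v (pderiv i (monomial d (1 : K))) * (u i - v i)) := by ring
  rw [hid]
  refine (hna _ _).trans (max_le ?_ ?_)
  · rw [norm_mul, pow_two]
    exact mul_le_mul (hε j) (monoA hna hu hv hε0 hε d) (norm_nonneg _) hε0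
  · rw [norm_mul]
    calc ‖v j‖ * ‖_‖ ≤ 1 * (ε ^ 2) := mul_le_mul (hv j) ih (norm_nonneg _) zero_le_one
    _ = ε ^ 2 := one_mul _


omit hu hv hε0 hε in
lemma evalBound (f : MvPolynomial σ K) (hfc : ∀ d, ‖coeff d f‖ ≤ 1)
    (x : σ → K) (hx : ∀ j, ‖x j‖ ≤ 1) : ‖eval x f‖ ≤ 1 := by
  rw [eval_eq']
  refine na_sum hna _ _ zero_le_one fun d _ => ?_
  rw [norm_mul]
  calc ‖f.coeff d‖ * ‖∏ i, x i ^ d i‖ ≤ 1 * 1 :=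
    mul_le_mul (hfc d) (prodBound x hx d) (norm_nonneg _) zero_le_one
  _ = 1 := one_mul 1

omit hu hv hε0 hε hna in
lemma eval_pderiv_rep (f : MvPolynomial σ K) (i : σ) (x : σ → K) :
    eval x (pderiv i f) = ∑ d ∈ f.support, coeff d f * eval x (pderiv i (monomial d (1 : K))) := by
  conv_lhs => rw [← support_sum_monomial_coeff f]
  rw [map_sum, map_sum]
  refine Finset.sum_congr rfl fun d _ => ?_
  have h1 : monomial d (coeff d f) = coeff d f • monomial d (1 : K) := by
    rw [smul_monomial, smul_eq_mul, mul_one]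
  rw [h1, (pderiv i).map_smul, smul_eq_C_mul, map_mul, eval_C]

omit hu hv hε0 hε hna in
lemma eval_pderiv_mono (d : σ →₀ ℕ) (i : σ) (x : σ → K) :
    eval x (pderiv i (monomial d (1 : K)))
      = (d i : K) * ∏ j, x j ^ ((d - Finsupp.single i 1 : σ →₀ ℕ) j) := by
  rw [pderiv_monomial, eval_monomial, one_mul,
    Finsupp.prod_fintype _ _ fun j => pow_zero _]

omit hu hv hε0 hε in
lemma pderivBound (f : MvPolynomial σ K) (hfc : ∀ d, ‖coeff d f‖ ≤ 1) (i : σ)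
    (x : σ → K) (hx : ∀ j, ‖x j‖ ≤ 1) : ‖eval x (pderiv i f)‖ ≤ 1 := by
  rw [eval_pderiv_rep]
  refine na_sum hna _ _ zero_le_one fun d _ => ?_
  rw [eval_pderiv_mono, norm_mul, norm_mul]
  calc ‖f.coeff d‖ * (‖((d i : ℕ) : K)‖ * ‖∏ j, x j ^ ((d - Finsupp.single i 1 : σ →₀ ℕ) j)‖)
      ≤ 1 * (1 * 1) := by
        refine mul_le_mul (hfc d) (mul_le_mul (na_nat hna _) (prodBound x hx _)
          (norm_nonneg _) zero_le_one) (by positivity) zero_le_one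
  _ = 1 := by norm_num

lemma keyA (f : MvPolynomial σ K) (hfc : ∀ d, ‖coeff d f‖ ≤ 1) :
    ‖eval u f - eval v f‖ ≤ ε := by
  rw [eval_eq', eval_eq', ← Finset.sum_sub_distrib]
  refine na_sum hna _ _ hε0 fun d _ => ?_
  have h1 : f.coeff d * ∏ i, u i ^ d i - f.coeff d * ∏ i, v i ^ d i
      = f.coeff d * ((∏ i, u i ^ d i) - ∏ i, v i ^ d i) := by ring
  rw [h1, norm_mul]
  calc ‖f.coeff d‖ * ‖(∏ i, u i ^ d i) - ∏ i, v i ^ d i‖ ≤ 1 * ε :=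
    mul_le_mul (hfc d) (monoA hna hu hv hε0 hε d) (norm_nonneg _) zero_le_one
  _ = ε := one_mul ε

lemma pderivDiff (f : MvPolynomial σ K) (hfc : ∀ d, ‖coeff d f‖ ≤ 1) (i : σ) :
    ‖eval u (pderiv i f) - eval v (pderiv i f)‖ ≤ ε := by
  rw [eval_pderiv_rep, eval_pderiv_rep, ← Finset.sum_sub_distrib]
  refine na_sum hna _ _ hε0 fun d _ => ?_
  rw [eval_pderiv_mono, eval_pderiv_mono]
  have h1 : f.coeff d * ((d i : K) * ∏ j, u j ^ ((d - Finsupp.single i 1 : σ →₀ ℕ) j))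
      - f.coeff d * ((d i : K) * ∏ j, v j ^ ((d - Finsupp.single i 1 : σ →₀ ℕ) j))
      = f.coeff d * ((d i : K) *
        ((∏ j, u j ^ ((d - Finsupp.single i 1 : σ →₀ ℕ) j))
          - ∏ j, v j ^ ((d - Finsupp.single i 1 : σ →₀ ℕ) j))) := by ring
  rw [h1, norm_mul, norm_mul]
  calc ‖f.coeff d‖ * (‖((d i : ℕ) : K)‖ * ‖_‖) ≤ 1 * (1 * ε) := by
        refine mul_le_mul (hfc d) (mul_le_mul (na_nat hna _)
          (monoA hna hu hv hε0 hε _) (norm_nonneg _) zero_le_one) (by positivity) zero_le_one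
  _ = ε := by rw [one_mul, one_mul]

lemma keyB' (f : MvPolynomial σ K) (hfc : ∀ d, ‖coeff d f‖ ≤ 1) :
    ‖eval u f - eval v f - ∑ i, eval v (pderiv i f) * (u i - v i)‖ ≤ ε ^ 2 := by
  have h1 : ∑ i, eval v (pderiv i f) * (u i - v i)
      = ∑ d ∈ f.support, f.coeff d
          * ∑ i, eval v (pderiv i (monomial d (1 : K))) * (u i - v i) := by
    have h0 : (∑ i, eval v (pderiv i f) * (u i - v i))
        = ∑ i, ∑ d ∈ f.support,
            f.coeff d * eval v (pderiv i (monomial d (1 : K))) * (u i - v i) :=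
      Finset.sum_congr rfl fun i _ => by rw [eval_pderiv_rep, Finset.sum_mul]
    rw [h0, Finset.sum_comm]
    refine Finset.sum_congr rfl fun d _ => ?_
    rw [Finset.mul_sum]
    exact Finset.sum_congr rfl fun i _ => by ring
  rw [h1, eval_eq', eval_eq', ← Finset.sum_sub_distrib, ← Finset.sum_sub_distrib]
  refine na_sum hna _ _ (by positivity) fun d _ => ?_
  have h2 : f.coeff d * ∏ i, u i ^ d i - f.coeff d * ∏ i, v i ^ d i
      - f.coeff d * ∑ i, eval v (pderiv i (monomial d (1 : K))) * (u i - v i)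
      = f.coeff d * ((∏ i, u i ^ d i) - (∏ i, v i ^ d i)
        - ∑ i, eval v (pderiv i (monomial d (1 : K))) * (u i - v i)) := by ring
  rw [h2, norm_mul]
  calc ‖f.coeff d‖ * ‖_‖ ≤ 1 * ε ^ 2 :=
    mul_le_mul (hfc d) (monoB hna hu hv hε0 hε d) (norm_nonneg _) zero_le_one
  _ = ε ^ 2 := one_mul _


omit hu hv hε0 hε in
lemma det_bound {m : ℕ} (M : Matrix (Fin m) (Fin m) K) (h : ∀ i j, ‖M i j‖ ≤ 1) :
    ‖M.det‖ ≤ 1 := by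
  rw [Matrix.det_apply']
  refine na_sum hna _ _ zero_le_one fun p _ => ?_
  rw [norm_mul]
  have h1 : ‖(Equiv.Perm.sign p : ℤ) • (1 : K)‖ = 1 := by
    rcases Int.units_eq_one_or (Equiv.Perm.sign p) with h' | h' <;> simp [h']
  have h2 : ‖((Equiv.Perm.sign p : ℤ) : K)‖ = 1 := by
    simpa using h1
  rw [h2, one_mul, norm_prod]
  exact Finset.prod_le_one (fun i _ => norm_nonneg _) fun i _ => h _ _

omit hu hv hε0 hε in
lemma adj_bound {m : ℕ} (M : Matrix (Fin m) (Fin m) K) (h : ∀ i j, ‖M i j‖ ≤ 1) :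
    ∀ i j, ‖M.adjugate i j‖ ≤ 1 := by
  intro i j
  rw [Matrix.adjugate_apply]
  refine det_bound hna _ fun k l => ?_
  rw [Matrix.updateRow_apply]
  by_cases hk : k = j
  · rcases eq_or_ne l i with h' | h' <;> simp [hk, Pi.single_apply, h']
  · simp [hk, h k l]

omit hu hv hε0 hε in
lemma mulVec_bound {m : ℕ} (M : Matrix (Fin m) (Fin m) K) (h : ∀ i j, ‖M i j‖ ≤ 1)
    (w : Fin m → K) {C : ℝ} (hC : 0 ≤ C) (hw : ∀ j, ‖w j‖ ≤ C) :
    ∀ i, ‖(M.mulVec w) i‖ ≤ C := by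
  intro i
  show ‖∑ j, M i j * w j‖ ≤ C
  refine na_sum hna _ _ hC fun j _ => ?_
  rw [norm_mul]
  calc ‖M i j‖ * ‖w j‖ ≤ 1 * C := mul_le_mul (h i j) (hw j) (norm_nonneg _) zero_le_one
  _ = C := one_mul C


omit hu hv hε0 hε in
lemma pina {m : ℕ} (x y : Fin m → K) : ‖x + y‖ ≤ max ‖x‖ ‖y‖ := by
  refine (pi_norm_le_iff_of_nonneg ((norm_nonneg x).trans (le_max_left _ _))).2 fun i => ?_
  exact (hna _ _).trans (max_le_max (norm_le_pi_norm x i) (norm_le_pi_norm y i))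

omit hu hv hε0 hε in
lemma pina_sub {m : ℕ} (x y : Fin m → K) : ‖x - y‖ ≤ max ‖x‖ ‖y‖ := by
  simpa [sub_eq_add_neg] using pina hna x (-y)

end Helpers

/-- Hensel's Lemma with parameters (the local section in the proof of the non-archimedean
implicit function theorem): let `K` be complete non-archimedean with ring of integers `R`,
`f₁,…,fₙ ∈ R[Y₁,…,Y_r][X₁,…,Xₙ]` and `a ∈ Rⁿ` with `fₗ(0,a) = 0` and
`δ := ‖det(∂f/∂X)(0,a)‖ > 0`.  Then for each `y` with `‖yₗ‖ < δ²` there is a unique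
`b ∈ Rⁿ` with `fₗ(y,b) = 0` and `‖bₗ − aₗ‖ < δ`; this defines a section `s` with
`s 0 = a`. -/
theorem stmt14 (K : Type) [NormedField K] [CompleteSpace K]
    (hna : ∀ x y : K, ‖x + y‖ ≤ max ‖x‖ ‖y‖)
    (r n : ℕ) (f : Fin n → MvPolynomial (Fin r ⊕ Fin n) K)
    (hf : ∀ l d, ‖coeff d (f l)‖ ≤ 1)
    (a : Fin n → K) (ha : ∀ i, ‖a i‖ ≤ 1)
    (hza : ∀ l, eval (Sum.elim (0 : Fin r → K) a) (f l) = 0)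
    (δ : ℝ) (hδ : δ = ‖eval (Sum.elim (0 : Fin r → K) a)
      (Matrix.det (Matrix.of fun i j => pderiv (Sum.inr j) (f i)))‖)
    (hδpos : 0 < δ) :
    (∀ y : Fin r → K, (∀ l, ‖y l‖ < δ ^ 2) →
      ∃! b : Fin n → K, (∀ i, ‖b i‖ ≤ 1) ∧ (∀ l, eval (Sum.elim y b) (f l) = 0) ∧
        ∀ l, ‖b l - a l‖ < δ) ∧
    ∃ s : (Fin r → K) → (Fin n → K), s 0 = a ∧
      ∀ y : Fin r → K, (∀ l, ‖y l‖ < δ ^ 2) →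
        (∀ i, ‖s y i‖ ≤ 1) ∧ (∀ l, eval (Sum.elim y (s y)) (f l) = 0) ∧
          ∀ l, ‖s y l - a l‖ < δ := by
  classical
  have hx0le : ∀ i, ‖Sum.elim (0 : Fin r → K) a i‖ ≤ 1 := by rintro (l | i) <;> simp [ha]
  set M : Matrix (Fin n) (Fin n) K :=
    Matrix.of fun i j => eval (Sum.elim (0 : Fin r → K) a) (pderiv (Sum.inr j) (f i)) with hM
  have hδM : δ = ‖M.det‖ := by
    rw [hδ, RingHom.map_det]
    congr 1
  have hM1 : ∀ i j, ‖M i j‖ ≤ 1 := fun i j =>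
    pderivBound hna (f i) (hf i) (Sum.inr j) _ hx0le
  have hδ1 : δ ≤ 1 := hδM ▸ det_bound hna M hM1
  have hdet : M.det ≠ 0 := by
    rw [hδM] at hδpos; exact norm_pos_iff.mp hδpos
  have hN1 : ∀ i j, ‖M.adjugate i j‖ ≤ 1 := adj_bound hna M hM1
  have hδinv : ‖(M.det)⁻¹‖ = δ⁻¹ := by rw [norm_inv, hδM]
  set N := M.adjugate with hN
  set F : (Fin r → K) → (Fin n → K) → (Fin n → K) :=
    fun y b l => eval (Sum.elim y b) (f l) with hF
  set Φ : (Fin r → K) → (Fin n → K) → (Fin n → K) :=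
    fun y b => b - (M.det)⁻¹ • N.mulVec (F y b) with hΦ
  -- fixed points of Φ y are exactly the zeros of F y
  have hfix : ∀ y b, Φ y b = b ↔ F y b = 0 := by
    intro y b
    constructor
    · intro h
      have h1 : (M.det)⁻¹ • N.mulVec (F y b) = 0 := sub_eq_self.mp h
      have h2 : N.mulVec (F y b) = 0 := by
        rcases smul_eq_zero.mp h1 with h' | h'
        · exact absurd (inv_eq_zero.mp h') hdet
        · exact h'
      have h3 : M.mulVec (N.mulVec (F y b)) = 0 := by rw [h2, Matrix.mulVec_zero]
      rw [Matrix.mulVec_mulVec, hN, Matrix.mul_adjugate, Matrix.smul_mulVec,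
        Matrix.one_mulVec] at h3
      exact (smul_eq_zero.mp h3).resolve_left hdet
    · intro h
      show b - _ = b
      rw [h, Matrix.mulVec_zero, smul_zero, sub_zero]
  -- the core contraction estimate
  have hest : ∀ (y : Fin r → K) (b b' : Fin n → K), (∀ l, ‖y l‖ ≤ 1) →
      (∀ i, ‖b i‖ ≤ 1) → (∀ i, ‖b' i‖ ≤ 1) →
      ‖Φ y b - Φ y b'‖ ≤ δ⁻¹ * (max (max ‖y‖ ‖b' - a‖) ‖b - b'‖ * ‖b - b'‖) := by
    intro y b b' hy1 hb hb'
    set ε := ‖b - b'‖ with hε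
    set η := max ‖y‖ ‖b' - a‖ with hη
    have hε0 : 0 ≤ ε := norm_nonneg _
    have hη0 : 0 ≤ η := le_max_of_le_left (norm_nonneg _)
    have hu : ∀ i, ‖Sum.elim y b i‖ ≤ 1 := by
      rintro (l | i)
      · simpa using hy1 l
      · simpa using hb i
    have hv : ∀ i, ‖Sum.elim y b' i‖ ≤ 1 := by
      rintro (l | i)
      · simpa using hy1 l
      · simpa using hb' i
    have hεd : ∀ i, ‖Sum.elim y b i - Sum.elim y b' i‖ ≤ ε := by
      rintro (l | i)
      · simp only [Sum.elim_inl, sub_self, norm_zero]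
        exact hε0
      · simpa using norm_le_pi_norm (b - b') i
    set J : Matrix (Fin n) (Fin n) K :=
      Matrix.of fun l j => eval (Sum.elim y b') (pderiv (Sum.inr j) (f l)) with hJ
    have hJM : ∀ l j, ‖J l j - M l j‖ ≤ η := by
      intro l j
      have hεd' : ∀ i, ‖Sum.elim y b' i - Sum.elim (0 : Fin r → K) a i‖ ≤ η := by
        rintro (l' | i)
        · simp only [Sum.elim_inl, Pi.zero_apply, sub_zero]
          exact (norm_le_pi_norm y l').trans (le_max_left _ _)
        · simp only [Sum.elim_inr]
          exact le_trans (by simpa using norm_le_pi_norm (b' - a) i) (le_max_right _ _)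
      exact pderivDiff hna hv hx0le hη0 hεd' (f l) (hf l) (Sum.inr j)
    have hErr : ∀ l, ‖F y b l - F y b' l - (J.mulVec (b - b')) l‖ ≤ ε ^ 2 := by
      intro l
      have hkb := keyB' hna hu hv hε0 hεd (f l) (hf l)
      have hsum : (∑ i : Fin r ⊕ Fin n, eval (Sum.elim y b') (pderiv i (f l))
          * (Sum.elim y b i - Sum.elim y b' i)) = (J.mulVec (b - b')) l := by
        rw [Fintype.sum_sum_type]
        simp only [Sum.elim_inl, Sum.elim_inr, sub_self, mul_zero,
          Finset.sum_const_zero, zero_add]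
        simp [Matrix.mulVec, dotProduct, hJ]
      rw [← hsum]
      exact hkb
    -- decomposition of the difference
    have hdecomp : Φ y b - Φ y b' = -((M.det)⁻¹ • (N.mulVec ((J - M).mulVec (b - b'))
        + N.mulVec (F y b - F y b' - J.mulVec (b - b')))) := by
      have e1 : F y b - F y b' = M.mulVec (b - b') + ((J - M).mulVec (b - b')
          + (F y b - F y b' - J.mulVec (b - b'))) := by
        rw [Matrix.sub_mulVec]
        abel
      have e2 : N.mulVec (F y b - F y b') = M.det • (b - b')
          + (N.mulVec ((J - M).mulVec (b - b'))
            + N.mulVec (F y b - F y b' - J.mulVec (b - b'))) := by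
        have hNM : N * M = M.det • (1 : Matrix (Fin n) (Fin n) K) := Matrix.adjugate_mul M
        conv_lhs => rw [e1]
        rw [Matrix.mulVec_add, Matrix.mulVec_add, Matrix.mulVec_mulVec, hNM,
          Matrix.smul_mulVec, Matrix.one_mulVec]
      have e3 : Φ y b - Φ y b' = (b - b') - (M.det)⁻¹ • N.mulVec (F y b - F y b') := by
        show (b - _) - (b' - _) = _
        rw [Matrix.mulVec_sub, smul_sub]
        abel
      rw [e3, e2, smul_add, smul_smul, inv_mul_cancel₀ hdet, one_smul]
      abel
    rw [hdecomp, norm_neg, norm_smul, hδinv]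
    refine mul_le_mul_of_nonneg_left ?_ (by positivity)
    refine (pina hna _ _).trans (max_le ?_ ?_)
    · have hinner : ∀ j, ‖((J - M).mulVec (b - b')) j‖ ≤ η * ε := by
        intro j
        show ‖∑ k, (J - M) j k * (b - b') k‖ ≤ η * ε
        refine na_sum hna _ _ (by positivity) fun k _ => ?_
        rw [norm_mul]
        have h1 : ‖(J - M) j k‖ ≤ η := by
          rw [Matrix.sub_apply]; exact hJM j k
        exact mul_le_mul h1 (norm_le_pi_norm (b - b') k) (norm_nonneg _) hη0
      have houter := mulVec_bound hna N hN1 _ (by positivity) hinner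
      refine ((pi_norm_le_iff_of_nonneg (by positivity)).2 houter).trans ?_
      exact mul_le_mul_of_nonneg_right (le_max_left _ _) hε0
    · have houter := mulVec_bound hna N hN1 _ (by positivity) hErr
      refine ((pi_norm_le_iff_of_nonneg (by positivity)).2 houter).trans ?_
      calc ε ^ 2 = ε * ε := sq ε
      _ ≤ max η ε * ε := mul_le_mul_of_nonneg_right (le_max_right _ _) hε0
  -- distance of Φ y a from a
  have hzero : ∀ y : Fin r → K, (∀ l, ‖y l‖ ≤ 1) → ‖Φ y a - a‖ ≤ δ⁻¹ * ‖y‖ := by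
    intro y hy1
    have hu : ∀ i, ‖Sum.elim y a i‖ ≤ 1 := by
      rintro (l | i)
      · simpa using hy1 l
      · simpa using ha i
    have hεd : ∀ i, ‖Sum.elim y a i - Sum.elim (0 : Fin r → K) a i‖ ≤ ‖y‖ := by
      rintro (l | i)
      · simpa using norm_le_pi_norm y l
      · simp
    have hFa : ∀ l, ‖F y a l‖ ≤ ‖y‖ := by
      intro l
      have h1 := keyA hna hu hx0le (norm_nonneg y) hεd (f l) (hf l)
      rwa [hza l, sub_zero] at h1
    have h2 : Φ y a - a = -((M.det)⁻¹ • N.mulVec (F y a)) := by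
      show a - _ - a = _
      abel
    rw [h2, norm_neg, norm_smul, hδinv]
    exact mul_le_mul_of_nonneg_left
      ((pi_norm_le_iff_of_nonneg (norm_nonneg y)).2
        (mulVec_bound hna N hN1 _ (norm_nonneg y) hFa)) (by positivity)
  -- main existence and uniqueness
  have main : ∀ y : Fin r → K, (∀ l, ‖y l‖ < δ ^ 2) →
      ∃! b : Fin n → K, (∀ i, ‖b i‖ ≤ 1) ∧ (∀ l, eval (Sum.elim y b) (f l) = 0) ∧
        ∀ l, ‖b l - a l‖ < δ := by
    intro y hy
    have hδ2pos : (0 : ℝ) < δ ^ 2 := by positivity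
    have hY : ‖y‖ < δ ^ 2 := (pi_norm_lt_iff hδ2pos).2 hy
    have hδ21 : δ ^ 2 ≤ 1 := by nlinarith
    have hy1 : ∀ l, ‖y l‖ ≤ 1 := fun l => (hy l).le.trans hδ21
    set t := δ⁻¹ * ‖y‖ with ht
    have ht0 : 0 ≤ t := by positivity
    have htδ : t < δ := by
      calc δ⁻¹ * ‖y‖ < δ⁻¹ * δ ^ 2 := by
            exact mul_lt_mul_of_pos_left hY (inv_pos.2 hδpos)
      _ = δ := by rw [pow_two, ← mul_assoc, inv_mul_cancel₀ hδpos.ne', one_mul]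
    have ht1 : t ≤ 1 := htδ.le.trans hδ1
    have hinv1 : (1 : ℝ) ≤ δ⁻¹ := by
      simpa using inv_anti₀ hδpos hδ1
    have hYt : ‖y‖ ≤ t := by
      calc ‖y‖ = 1 * ‖y‖ := (one_mul _).symm
      _ ≤ δ⁻¹ * ‖y‖ := mul_le_mul_of_nonneg_right hinv1 (norm_nonneg y)
    have hκ : δ⁻¹ * t < 1 := by
      have h1 : δ⁻¹ * t < δ⁻¹ * (δ⁻¹ * δ ^ 2) :=
        mul_lt_mul_of_pos_left (mul_lt_mul_of_pos_left hY (inv_pos.2 hδpos)) (inv_pos.2 hδpos)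
      have h2 : δ⁻¹ * (δ⁻¹ * δ ^ 2) = 1 := by field_simp [pow_two]
      linarith
    have hκ0 : 0 ≤ δ⁻¹ * t := by positivity
    set S := Metric.closedBall a t with hS
    have hmemS : ∀ b ∈ S, (∀ i, ‖b i‖ ≤ 1) ∧ ‖b - a‖ ≤ t := by
      intro b hb
      have hba : ‖b - a‖ ≤ t := by rwa [← dist_eq_norm]
      refine ⟨fun i => ?_, hba⟩
      have h1 : b i = (b i - a i) + a i := by ring
      rw [h1]
      refine (hna _ _).trans (max_le ?_ (ha i))
      have h2 : ‖b i - a i‖ ≤ ‖b - a‖ := by simpa using norm_le_pi_norm (b - a) i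
      exact h2.trans (hba.trans ht1)
    have hmaps : Set.MapsTo (Φ y) S S := by
      intro b hb
      obtain ⟨hb1, hbt⟩ := hmemS b hb
      have h1 := hest y b a hy1 hb1 ha
      have h2 := hzero y hy1
      have h3 : max (max ‖y‖ ‖a - a‖) ‖b - a‖ ≤ t := by
        refine max_le (max_le hYt ?_) hbt
        simp [ht0]
      have h4 : ‖Φ y b - Φ y a‖ ≤ t := by
        refine h1.trans ?_
        calc δ⁻¹ * (max (max ‖y‖ ‖a - a‖) ‖b - a‖ * ‖b - a‖) ≤ δ⁻¹ * (t * t) := by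
              refine mul_le_mul_of_nonneg_left ?_ (by positivity)
              exact mul_le_mul h3 hbt (norm_nonneg _) ht0
        _ = (δ⁻¹ * t) * t := by ring
        _ ≤ 1 * t := mul_le_mul_of_nonneg_right hκ.le ht0
        _ = t := one_mul t
      have h5 : ‖Φ y a - a‖ ≤ t := h2
      show Φ y b ∈ Metric.closedBall a t
      rw [Metric.mem_closedBall, dist_eq_norm]
      have h6 : Φ y b - a = (Φ y b - Φ y a) + (Φ y a - a) := by abel
      rw [h6]
      exact (pina hna _ _).trans (max_le h4 h5)
    have hSc : IsComplete S := Metric.isClosed_closedBall.isComplete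
    set κ : NNReal := ⟨δ⁻¹ * t, hκ0⟩ with hκdef
    have hcontr : ContractingWith κ (hmaps.restrict (Φ y) S S) := by
      constructor
      · exact_mod_cast hκ
      · refine LipschitzWith.of_dist_le_mul fun x z => ?_
        rw [Subtype.dist_eq, Subtype.dist_eq, Set.MapsTo.val_restrict_apply,
          Set.MapsTo.val_restrict_apply, dist_eq_norm, dist_eq_norm]
        obtain ⟨hx1, hxt⟩ := hmemS x.1 x.2
        obtain ⟨hz1, hzt⟩ := hmemS z.1 z.2
        have h1 := hest y x.1 z.1 hy1 hx1 hz1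
        refine h1.trans ?_
        have h2 : ‖x.1 - z.1‖ ≤ t := by
          have := pina_sub hna (x.1 - a) (z.1 - a)
          have h3 : x.1 - a - (z.1 - a) = x.1 - z.1 := by abel
          rw [h3] at this
          exact this.trans (max_le hxt hzt)
        have h4 : max (max ‖y‖ ‖z.1 - a‖) ‖x.1 - z.1‖ ≤ t :=
          max_le (max_le hYt hzt) h2
        calc δ⁻¹ * (max (max ‖y‖ ‖z.1 - a‖) ‖x.1 - z.1‖ * ‖x.1 - z.1‖)
            ≤ δ⁻¹ * (t * ‖x.1 - z.1‖) := by
              refine mul_le_mul_of_nonneg_left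
                (mul_le_mul_of_nonneg_right h4 (norm_nonneg _)) (by positivity)
        _ = (κ : ℝ) * ‖x.1 - z.1‖ := by rw [hκdef]; exact (mul_assoc _ _ _).symm
    obtain ⟨bs, hbsS, hbsfix, -, -⟩ := hcontr.exists_fixedPoint' hSc hmaps
      (Metric.mem_closedBall_self ht0) (edist_ne_top _ _)
    obtain ⟨hbs1, hbst⟩ := hmemS bs hbsS
    have hbsF : F y bs = 0 := (hfix y bs).mp hbsfix
    have hbsδ : ‖bs - a‖ < δ := hbst.trans_lt htδ
    have hPbs : (∀ i, ‖bs i‖ ≤ 1) ∧ (∀ l, eval (Sum.elim y bs) (f l) = 0) ∧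
        ∀ l, ‖bs l - a l‖ < δ := by
      refine ⟨hbs1, fun l => ?_, fun l => ?_⟩
      · have := congrFun hbsF l
        simpa [hF] using this
      · have h1 : ‖bs l - a l‖ ≤ ‖bs - a‖ := by simpa using norm_le_pi_norm (bs - a) l
        exact h1.trans_lt hbsδ
    refine ⟨bs, hPbs, ?_⟩
    intro b hb
    obtain ⟨hb1, hbz, hbδ⟩ := hb
    have hFb : F y b = 0 := funext fun l => hbz l
    have hfixb : Φ y b = b := (hfix y b).mpr hFb
    have hfixbs : Φ y bs = bs := hbsfix
    have hba : ‖b - a‖ < δ := by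
      refine (pi_norm_lt_iff hδpos).2 fun i => ?_
      simpa using hbδ i
    by_contra hne
    have hsub : b - bs ≠ 0 := sub_ne_zero.2 hne
    have hpos : 0 < ‖b - bs‖ := norm_pos_iff.2 hsub
    have h1 := hest y b bs hy1 hb1 hbs1
    rw [hfixb, hfixbs] at h1
    have hbbs : ‖b - bs‖ < δ := by
      have h2 := pina_sub hna (b - a) (bs - a)
      have h3 : b - a - (bs - a) = b - bs := by abel
      rw [h3] at h2
      exact h2.trans_lt (max_lt hba (hbst.trans_lt htδ))
    have hyδ : ‖y‖ < δ := hY.trans_le (by nlinarith)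
    have hc : max (max ‖y‖ ‖bs - a‖) ‖b - bs‖ < δ :=
      max_lt (max_lt hyδ (hbst.trans_lt htδ)) hbbs
    have h4 : δ⁻¹ * (max (max ‖y‖ ‖bs - a‖) ‖b - bs‖ * ‖b - bs‖) < ‖b - bs‖ := by
      have h5 : δ⁻¹ * max (max ‖y‖ ‖bs - a‖) ‖b - bs‖ < 1 := by
        have h6 : δ⁻¹ * max (max ‖y‖ ‖bs - a‖) ‖b - bs‖ < δ⁻¹ * δ :=
          mul_lt_mul_of_pos_left hc (inv_pos.2 hδpos)
        rwa [inv_mul_cancel₀ hδpos.ne'] at h6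
      calc δ⁻¹ * (max (max ‖y‖ ‖bs - a‖) ‖b - bs‖ * ‖b - bs‖)
          = (δ⁻¹ * max (max ‖y‖ ‖bs - a‖) ‖b - bs‖) * ‖b - bs‖ := by ring
      _ < 1 * ‖b - bs‖ := mul_lt_mul_of_pos_right h5 hpos
      _ = ‖b - bs‖ := one_mul _
    exact absurd (h1.trans_lt h4) (lt_irrefl _)
  refine ⟨main, ?_⟩
  refine ⟨fun y => if h : ∀ l, ‖y l‖ < δ ^ 2 then (main y h).exists.choose else a, ?_, ?_⟩
  · have h0 : ∀ l, ‖(0 : Fin r → K) l‖ < δ ^ 2 := fun l => by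
      simp only [Pi.zero_apply, norm_zero]; positivity
    simp only []
    rw [dif_pos h0]
    have hPa : (∀ i, ‖a i‖ ≤ 1) ∧ (∀ l, eval (Sum.elim (0 : Fin r → K) a) (f l) = 0) ∧
        ∀ l, ‖a l - a l‖ < δ := ⟨ha, hza, fun l => by simpa using hδpos⟩
    exact (main 0 h0).unique (main 0 h0).exists.choose_spec hPa
  · intro y hy
    simp only []
    rw [dif_pos hy]
    exact (main y hy).exists.choose_spec
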